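/- Suppose (b_n) is a sequence in ℚ with v_p(b_{n+2} B_{n+1}) < v_p(B_n) for all n ≥ 0, where A_n, B_n are defined by the continued fraction recurrences A_{-1}=1, A_0=b_0, B_{-1}=0, B_0=1, A_{n+1}=b_{n+1}A_n + A_{n-1}, B_{n+1}=b_{n+1}B_n + B_{n-1}. If moreover v_p(b_n) ≤ 0 for all n and v_p(b_n) < 0 for all odd n, then for all n ≥ 1: v_p(A_n) = v_p(b_0) + v_p(b_1) + ... + v_p(b_n) and v_p(B_n) = v_p(b_1) + ... + v_p(b_n). -/
import Mathlib


/-- Numerators of the convergents of `[b 0, b 1, …]`. -/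
def cfA (b : ℕ → ℚ) : ℕ → ℚ
  | 0 => b 0
  | 1 => b 1 * b 0 + 1
  | (n + 2) => b (n + 2) * cfA b (n + 1) + cfA b n

/-- Denominators of the convergents of `[b 0, b 1, …]`. -/
def cfB (b : ℕ → ℚ) : ℕ → ℚ
  | 0 => 1
  | 1 => b 1
  | (n + 2) => b (n + 2) * cfB b (n + 1) + cfB b n

private lemma val_add_eq' (p : ℕ) [Fact p.Prime] {q r : ℚ} (hq : q ≠ 0) (hr : r ≠ 0)
    (h : padicValRat p q < padicValRat p r) :
    q + r ≠ 0 ∧ padicValRat p (q + r) = padicValRat p q := by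
  have hqr : q + r ≠ 0 := by
    intro h0
    have hr' : r = -q := by linarith [h0, add_eq_zero_iff_eq_neg.mp h0]
    rw [hr', padicValRat.neg] at h
    exact lt_irrefl _ h
  exact ⟨hqr, padicValRat.add_eq_of_lt hqr hq hr h⟩

/-- If the partial quotients satisfy `v_p(b_{n+2} B_{n+1}) < v_p(B_n)`, `v_p(b_n) ≤ 0` for all
`n` and `v_p(b_n) < 0` for odd `n`, then for all `n ≥ 1`,
`v_p(A_n) = v_p(b_0) + ⋯ + v_p(b_n)` and `v_p(B_n) = v_p(b_1) + ⋯ + v_p(b_n)`. -/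
theorem valuation_convergents (p : ℕ) [Fact p.Prime] (hp : Odd p) (b : ℕ → ℚ)
    (hbne : ∀ n, b n ≠ 0)
    (hrec : ∀ n, padicValRat p (b (n + 2) * cfB b (n + 1)) < padicValRat p (cfB b n))
    (hle : ∀ n, padicValRat p (b n) ≤ 0)
    (hodd : ∀ n, Odd n → padicValRat p (b n) < 0) :
    ∀ n, 1 ≤ n →
      padicValRat p (cfA b n) = ∑ i ∈ Finset.range (n + 1), padicValRat p (b i) ∧
      padicValRat p (cfB b n) = ∑ i ∈ Finset.Icc 1 n, padicValRat p (b i) := by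
  have main : ∀ n,
      (cfA b n ≠ 0 ∧
        padicValRat p (cfA b n) = ∑ i ∈ Finset.range (n + 1), padicValRat p (b i)) ∧
      (cfB b n ≠ 0 ∧
        padicValRat p (cfB b n) = ∑ i ∈ Finset.Icc 1 n, padicValRat p (b i)) := by
    intro n
    induction n using Nat.twoStepInduction with
    | zero =>
      refine ⟨⟨hbne 0, ?_⟩, ⟨one_ne_zero, ?_⟩⟩
      · simp [cfA]
      · simp [cfB, padicValRat.one]
    | one =>
      have hmul : b 1 * b 0 ≠ 0 := mul_ne_zero (hbne 1) (hbne 0)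
      have hv : padicValRat p (b 1 * b 0) = padicValRat p (b 1) + padicValRat p (b 0) :=
        padicValRat.mul (hbne 1) (hbne 0)
      have h1 : padicValRat p (b 1) < 0 := hodd 1 ⟨0, rfl⟩
      have h0 : padicValRat p (b 0) ≤ 0 := hle 0
      have hlt : padicValRat p (b 1 * b 0) < padicValRat p (1 : ℚ) := by
        rw [hv, padicValRat.one]; linarith
      obtain ⟨hne, heq⟩ := val_add_eq' p hmul one_ne_zero hlt
      refine ⟨⟨?_, ?_⟩, ⟨hbne 1, ?_⟩⟩
      · show b 1 * b 0 + 1 ≠ 0; exact hne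
      · show padicValRat p (b 1 * b 0 + 1) = _
        rw [heq, hv]
        simp [Finset.sum_range_succ, add_comm]
      · show padicValRat p (b 1) = _
        simp
    | more n ih0 ih1 =>
      obtain ⟨⟨hA0, hvA0⟩, ⟨hB0, hvB0⟩⟩ := ih0
      obtain ⟨⟨hA1, hvA1⟩, ⟨hB1, hvB1⟩⟩ := ih1
      -- B part
      have hqB : b (n + 2) * cfB b (n + 1) ≠ 0 := mul_ne_zero (hbne (n + 2)) hB1
      obtain ⟨hBne, hBeq⟩ := val_add_eq' p hqB hB0 (hrec n)
      have hvB : padicValRat p (cfB b (n + 2)) =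
          ∑ i ∈ Finset.Icc 1 (n + 2), padicValRat p (b i) := by
        show padicValRat p (b (n + 2) * cfB b (n + 1) + cfB b n) = _
        rw [hBeq, padicValRat.mul (hbne (n + 2)) hB1, hvB1,
          Finset.sum_Icc_succ_top (by omega : 1 ≤ n + 2)]
        ring
      -- A part
      have hvmulA : padicValRat p (b (n + 2) * cfA b (n + 1)) =
          padicValRat p (b (n + 2)) + padicValRat p (cfA b (n + 1)) :=
        padicValRat.mul (hbne (n + 2)) hA1
      have hsum : (∑ i ∈ Finset.range (n + 2), padicValRat p (b i)) =
          (∑ i ∈ Finset.range (n + 1), padicValRat p (b i)) + padicValRat p (b (n + 1)) :=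
        Finset.sum_range_succ _ _
      have hneg : padicValRat p (b (n + 1)) + padicValRat p (b (n + 2)) < 0 := by
        rcases Nat.even_or_odd n with he | ho
        · have := hodd (n + 1) (Even.add_one he)
          have := hle (n + 2)
          linarith
        · obtain ⟨k, hk⟩ := ho
          have := hodd (n + 2) ⟨k + 1, by omega⟩
          have := hle (n + 1)
          linarith
      have hltA : padicValRat p (b (n + 2) * cfA b (n + 1)) < padicValRat p (cfA b n) := by
        rw [hvmulA, hvA1, hvA0, hsum]
        linarith
      have hqA : b (n + 2) * cfA b (n + 1) ≠ 0 := mul_ne_zero (hbne (n + 2)) hA1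
      obtain ⟨hAne, hAeq⟩ := val_add_eq' p hqA hA0 hltA
      refine ⟨⟨hAne, ?_⟩, ⟨hBne, hvB⟩⟩
      show padicValRat p (b (n + 2) * cfA b (n + 1) + cfA b n) = _
      rw [hAeq, hvmulA, hvA1, Finset.sum_range_succ _ (n + 2)]
      ring
  intro n _
  exact ⟨(main n).1.2, (main n).2.2⟩
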